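/- Let T > 0 and α ∈ (0,1). There exist constants C = C(α,m,n,T) > 0 and m₀ = m₀(α,m,n) > 0 such that for every function u ∈ C^{0,2+α}_{WF}([0,T]×S̄_{n,m}), every ε ∈ (0,1), and every l ∈ {1,…,m}: ‖u_{y_l}‖_{C([0,T]×S̄_{n,m})} ≤ ε ‖u‖_{C^{0,2+α}_{WF}([0,T]×S̄_{n,m})} + C ε^{−m₀} ‖u‖_{C([0,T]×S̄_{n,m})}. -/

import Mathlib

open scoped ENNReal BigOperators
open Set

noncomputable section

namespace Kimura

/-- Spatial variable space `ℝ^n × ℝ^m`. -/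
abbrev Z (n m : ℕ) : Type := (Fin n → ℝ) × (Fin m → ℝ)

/-- Time–space variable space. -/
abbrev E (n m : ℕ) : Type := ℝ × Z n m

variable {n m : ℕ}

/-- The open orthant `S_{n,m} = (0,∞)^n × ℝ^m`. -/
def Sopen (n m : ℕ) : Set (Z n m) := {z | ∀ i, 0 < z.1 i}

/-- The closed orthant `S̄_{n,m} = [0,∞)^n × ℝ^m`. -/
def Sbar (n m : ℕ) : Set (Z n m) := {z | ∀ i, 0 ≤ z.1 i}

/-- The function `F` used to define the WF distance. -/
def Fwf (s : ℝ) : ℝ := if s ≤ 1 then 2 * Real.sqrt s else s + 1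

/-- The spatial WF distance `ρ₀`. -/
def rho0 (z0 z : Z n m) : ℝ :=
  (⨆ i : Fin n, |Fwf (z0.1 i) - Fwf (z.1 i)|) + ⨆ l : Fin m, |z0.2 l - z.2 l|

/-- The parabolic WF distance `ρ`. -/
def rho (P0 P : E n m) : ℝ := rho0 P0.2 P.2 + Real.sqrt |P0.1 - P.1|

/-- The parabolic cylinder `J × D`. -/
def QT (J : Set ℝ) (D : Set (Z n m)) : Set (E n m) := J ×ˢ D

/-- Supremum norm on `J × D` (valued in `ℝ≥0∞`). -/
def supN (J : Set ℝ) (D : Set (Z n m)) (u : E n m → ℝ) : ℝ≥0∞ :=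
  ⨆ P ∈ QT J D, ENNReal.ofReal |u P|

/-- The WF Hölder seminorm of exponent `a` on `J × D`. -/
def holderSemi (a : ℝ) (J : Set ℝ) (D : Set (Z n m)) (u : E n m → ℝ) : ℝ≥0∞ :=
  ⨆ P1 ∈ QT J D, ⨆ P2 ∈ QT J D, ⨆ _ : P1 ≠ P2,
    ENNReal.ofReal (|u P1 - u P2| / rho P1 P2 ^ a)

/-- The `C^{0,α}_{WF}` norm on `J × D`. -/
def holderN (a : ℝ) (J : Set ℝ) (D : Set (Z n m)) (u : E n m → ℝ) : ℝ≥0∞ :=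
  supN J D u + holderSemi a J D u

/-- Time direction. -/
def eT (n m : ℕ) : E n m := (1, 0)

/-- `x_i` direction. -/
def eX (n m : ℕ) (i : Fin n) : E n m := (0, (Pi.single i 1, 0))

/-- `y_l` direction. -/
def eY (n m : ℕ) (l : Fin m) : E n m := (0, (0, Pi.single l 1))

/-- Partial (line) derivative along the direction `v`. -/
def dl (v : E n m) (u : E n m → ℝ) : E n m → ℝ := fun P => lineDeriv ℝ u P v

/-- Iterated partial derivative `D_t^τ D_x^{ζx} D_y^{ζy}`. -/
def multiD (τ : ℕ) (ζx : Fin n → ℕ) (ζy : Fin m → ℕ) (u : E n m → ℝ) : E n m → ℝ :=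
  (dl (eT n m))^[τ]
    (((List.ofFn fun i : Fin n => (dl (eX n m i))^[ζx i]).foldr (· ∘ ·) id)
      (((List.ofFn fun l : Fin m => (dl (eY n m l))^[ζy l]).foldr (· ∘ ·) id) u))

/-- A parabolic multi-index `(τ, ζ)`. -/
abbrev MIdx (n m : ℕ) : Type := ℕ × (Fin n → ℕ) × (Fin m → ℕ)

/-- Parabolic weight `2τ + |ζ|` of a multi-index. -/
def MIdx.wt (p : MIdx n m) : ℕ := 2 * p.1 + ((∑ i, p.2.1 i) + ∑ l, p.2.2 l)

/-- Iterated derivative associated with a multi-index. -/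
def multiDP (p : MIdx n m) (u : E n m → ℝ) : E n m → ℝ := multiD p.1 p.2.1 p.2.2 u

/-- Multi-indices of parabolic weight at most `k`. -/
def Idx (n m k : ℕ) : Type := {p : MIdx n m // MIdx.wt p ≤ k}

/-- The `C^{k,α}_{WF}` norm on `J × D`. -/
def CkN (k : ℕ) (a : ℝ) (J : Set ℝ) (D : Set (Z n m)) (u : E n m → ℝ) : ℝ≥0∞ :=
  ∑' p : Idx n m k, holderN a J D (multiDP p.1 u)

/-- The region `M_I`. -/
def MI (n m : ℕ) (I : Finset (Fin n)) : Set (Z n m) :=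
  {z | (∀ i ∈ I, z.1 i ∈ Set.Ioo (0:ℝ) 1) ∧ ∀ j ∉ I, 1 < z.1 j}

/-- The region `M'_I`. -/
def MI' (n m : ℕ) (I : Finset (Fin n)) : Set (Z n m) :=
  {z | (∀ i ∈ I, z.1 i ∈ Set.Ioo (0:ℝ) 1) ∧ ∀ j ∉ I, 1 / 2 < z.1 j}

/-- The region `M''_I`. -/
def MI'' (n m : ℕ) (I : Finset (Fin n)) : Set (Z n m) :=
  {z | (∀ i ∈ I, z.1 i ∈ Set.Ioo (0:ℝ) 2) ∧ ∀ j ∉ I, 1 / 4 < z.1 j}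

/-- The `C^{0,2+α}_{WF}` norm on a piece `D ⊆ M̄_I`. -/
def pieceN (I : Finset (Fin n)) (a : ℝ) (J : Set ℝ) (D : Set (Z n m)) (u : E n m → ℝ) :
    ℝ≥0∞ :=
  CkN 1 a J D u + holderN a J D (dl (eT n m) u)
  + (∑ i ∈ I, ∑ j ∈ I, holderN a J D
      fun P => Real.sqrt (P.2.1 i * P.2.1 j) * dl (eX n m i) (dl (eX n m j) u) P)
  + (∑ i ∈ I, ∑ j ∈ Iᶜ, holderN a J D
      fun P => Real.sqrt (P.2.1 i) * dl (eX n m i) (dl (eX n m j) u) P)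
  + (∑ i ∈ I, ∑ l : Fin m, holderN a J D
      fun P => Real.sqrt (P.2.1 i) * dl (eX n m i) (dl (eY n m l) u) P)
  + (∑ i ∈ Iᶜ, ∑ j ∈ Iᶜ, holderN a J D (dl (eX n m i) (dl (eX n m j) u)))
  + (∑ i ∈ Iᶜ, ∑ l : Fin m, holderN a J D (dl (eX n m i) (dl (eY n m l) u)))
  + ∑ l : Fin m, ∑ q : Fin m, holderN a J D (dl (eY n m l) (dl (eY n m q) u))

/-- The `C^{0,2+α}_{WF}` norm on `J × D` for an arbitrary domain `D`. -/
def C2N (a : ℝ) (J : Set ℝ) (D : Set (Z n m)) (u : E n m → ℝ) : ℝ≥0∞ :=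
  ∑ I : Finset (Fin n), pieceN I a J (D ∩ closure (MI n m I)) u

/-- The `C^{k,2+α}_{WF}` norm on `J × D`. -/
def Ck2N (k : ℕ) (a : ℝ) (J : Set ℝ) (D : Set (Z n m)) (u : E n m → ℝ) : ℝ≥0∞ :=
  ∑' p : Idx n m k, C2N a J D (multiDP p.1 u)

/-- Time-independent extension of a spatial function. -/
def timeExt (f : Z n m → ℝ) : E n m → ℝ := fun P => f P.2

/-- The elliptic `C^{k,α}_{WF}` norm on `D`. -/
def eCkN (k : ℕ) (a : ℝ) (D : Set (Z n m)) (f : Z n m → ℝ) : ℝ≥0∞ :=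
  CkN k a (Set.Icc 0 0) D (timeExt f)

/-- The elliptic `C^{k,2+α}_{WF}` norm on `D`. -/
def eCk2N (k : ℕ) (a : ℝ) (D : Set (Z n m)) (f : Z n m → ℝ) : ℝ≥0∞ :=
  Ck2N k a (Set.Icc 0 0) D (timeExt f)

/-- Supremum norm of a spatial function on `D`. -/
def supNZ (D : Set (Z n m)) (f : Z n m → ℝ) : ℝ≥0∞ := ⨆ z ∈ D, ENNReal.ofReal |f z|

/-- Membership in the space `C^{k,α}_{WF}(J × D)`. -/
def MemCk (k : ℕ) (a : ℝ) (J : Set ℝ) (D : Set (Z n m)) (u : E n m → ℝ) : Prop :=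
  CkN k a J D u ≠ ⊤ ∧ ∀ p : Idx n m k, ContinuousOn (multiDP p.1 u) (QT J D)

/-- Membership in the space `C^{k,2+α}_{WF}(J × D)`. -/
def MemCk2 (k : ℕ) (a : ℝ) (J : Set ℝ) (D : Set (Z n m)) (u : E n m → ℝ) : Prop :=
  Ck2N k a J D u ≠ ⊤
  ∧ (∀ p : Idx n m (k + 1), ContinuousOn (multiDP p.1 u) (QT J D))
  ∧ (∀ p : Idx n m k, ContinuousOn (dl (eT n m) (multiDP p.1 u)) (QT J D))
  ∧ (∀ p : Idx n m (k + 2), ContinuousOn (multiDP p.1 u) (QT J (D ∩ Sopen n m)))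

/-- Membership in the elliptic space `C^{k,α}_{WF}(D)`. -/
def MemECk (k : ℕ) (a : ℝ) (D : Set (Z n m)) (f : Z n m → ℝ) : Prop :=
  MemCk k a (Set.Icc 0 0) D (timeExt f)

/-- Membership in the elliptic space `C^{k,2+α}_{WF}(D)`. -/
def MemECk2 (k : ℕ) (a : ℝ) (D : Set (Z n m)) (f : Z n m → ℝ) : Prop :=
  MemCk2 k a (Set.Icc 0 0) D (timeExt f)

/-- Coefficients of a generalized Kimura operator. -/
structure Coeffs (n m : ℕ) where
  a : Fin n → Z n m → ℝ
  tA : Fin n → Fin n → Z n m → ℝ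
  b : Fin n → Z n m → ℝ
  c : Fin n → Fin m → Z n m → ℝ
  d : Fin m → Fin m → Z n m → ℝ
  e : Fin m → Z n m → ℝ

/-- The generalized Kimura operator `L`. -/
def Lop (co : Coeffs n m) (u : E n m → ℝ) : E n m → ℝ := fun P =>
  (∑ i, (P.2.1 i * co.a i P.2 * dl (eX n m i) (dl (eX n m i) u) P
        + co.b i P.2 * dl (eX n m i) u P))
  + (∑ i, ∑ j, P.2.1 i * P.2.1 j * co.tA i j P.2 * dl (eX n m i) (dl (eX n m j) u) P)
  + (∑ i, ∑ l, P.2.1 i * co.c i l P.2 * dl (eX n m i) (dl (eY n m l) u) P)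
  + (∑ q, ∑ l, co.d q l P.2 * dl (eY n m q) (dl (eY n m l) u) P)
  + ∑ l, co.e l P.2 * dl (eY n m l) u P

/-- Strict ellipticity (condition (1) of the Assumption). -/
def Ellipt (δ : ℝ) (co : Coeffs n m) : Prop :=
  ∀ I : Finset (Fin n), ∀ z ∈ closure (MI n m I), ∀ ξ : Fin n → ℝ, ∀ η : Fin m → ℝ,
    δ * ((∑ i, ξ i ^ 2) + ∑ l, η l ^ 2) ≤
      (∑ i ∈ I, co.a i z * ξ i ^ 2) + (∑ i ∈ Iᶜ, z.1 i * co.a i z * ξ i ^ 2)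
      + (∑ i ∈ I, ∑ j ∈ I, co.tA i j z * ξ i * ξ j)
      + (∑ i ∈ I, ∑ j ∈ Iᶜ, z.1 j * (co.tA i j z + co.tA j i z) * ξ i * ξ j)
      + (∑ i ∈ Iᶜ, ∑ j ∈ Iᶜ, z.1 i * z.1 j * co.tA i j z * ξ i * ξ j)
      + (∑ i ∈ I, ∑ l, co.c i l z * ξ i * η l)
      + (∑ i ∈ Iᶜ, ∑ l, z.1 i * co.c i l z * ξ i * η l)
      + ∑ q, ∑ l, co.d q l z * η q * η l

/-- Hölder continuity of the coefficients (condition (2) of the Assumption). -/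
def HolderBd (k : ℕ) (a K : ℝ) (co : Coeffs n m) : Prop :=
  ∀ I : Finset (Fin n),
    (∑ i ∈ I, eCkN k a (closure (MI n m I)) (co.a i))
    + (∑ i ∈ Iᶜ, eCkN k a (closure (MI n m I)) fun z => z.1 i * co.a i z)
    + (∑ i ∈ I, ∑ j ∈ I, eCkN k a (closure (MI n m I)) (co.tA i j))
    + (∑ i ∈ I, ∑ j ∈ Iᶜ,
        (eCkN k a (closure (MI n m I)) (fun z => z.1 j * co.tA i j z)
         + eCkN k a (closure (MI n m I)) fun z => z.1 j * co.tA j i z))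
    + (∑ i ∈ Iᶜ, ∑ j ∈ Iᶜ, eCkN k a (closure (MI n m I)) fun z => z.1 i * z.1 j * co.tA i j z)
    + (∑ i ∈ I, ∑ l, eCkN k a (closure (MI n m I)) (co.c i l))
    + (∑ i ∈ Iᶜ, ∑ l, eCkN k a (closure (MI n m I)) fun z => z.1 i * co.c i l z)
    + (∑ q, ∑ l, eCkN k a (closure (MI n m I)) (co.d q l))
    + (∑ i, eCkN k a (closure (MI n m I)) (co.b i))
    + (∑ l, eCkN k a (closure (MI n m I)) (co.e l))
    ≤ ENNReal.ofReal K

/-- Nonnegativity of the drift (condition (3) of the Assumption). -/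
def NonnegDrift (co : Coeffs n m) : Prop :=
  ∀ i, ∀ z ∈ Sbar n m, z.1 i = 0 → 0 ≤ co.b i z

/-- The full coefficient Assumption of order `k`, exponent `a`, constants `δ`, `K`. -/
def Assump (k : ℕ) (a δ K : ℝ) (co : Coeffs n m) : Prop :=
  Ellipt δ co ∧ HolderBd k a K co ∧ NonnegDrift co

/-- The Euclidean ball of radius `r` about `z0`, relative to `S_{n,m}`. -/
def ball (z0 : Z n m) (r : ℝ) : Set (Z n m) :=
  {z ∈ Sopen n m |
    Real.sqrt ((∑ i, (z.1 i - z0.1 i) ^ 2) + ∑ l, (z.2 l - z0.2 l) ^ 2) < r}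

/-- A function all of whose iterated derivatives are continuous and bounded on `J × D`. -/
def SmoothBdd (J : Set ℝ) (D : Set (Z n m)) (g : E n m → ℝ) : Prop :=
  ∀ p : MIdx n m,
    ContinuousOn (multiDP p g) (QT J D) ∧ ∃ M : ℝ, ∀ P ∈ QT J D, |multiDP p g P| ≤ M

/-- Bounded continuous function on a set. -/
def BCOn {X : Type*} [TopologicalSpace X] (g : X → ℝ) (D : Set X) : Prop :=
  ContinuousOn g D ∧ ∃ M : ℝ, ∀ x ∈ D, |g x| ≤ M

/-! ### Auxiliary lemmas -/

lemma foldr_ofFn_id {A : Type*} : ∀ {k : ℕ} (f : Fin k → A → A),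
    (∀ j, f j = id) → (List.ofFn f).foldr (· ∘ ·) id = id := by
  intro k
  induction k with
  | zero => intro f _; simp
  | succ k ih =>
    intro f hf
    rw [List.ofFn_succ, List.foldr_cons, ih _ (fun j => hf _), hf 0]
    rfl

lemma foldr_ofFn_single {A : Type*} : ∀ {k : ℕ} (l : Fin k) (f : Fin k → A → A),
    (∀ j, j ≠ l → f j = id) → (List.ofFn f).foldr (· ∘ ·) id = f l := by
  intro k
  induction k with
  | zero => exact fun l => l.elim0
  | succ k ih =>
    intro l f hf
    rw [List.ofFn_succ, List.foldr_cons]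
    cases l using Fin.cases with
    | zero =>
      rw [foldr_ofFn_id _ (fun j => hf _ (Fin.succ_ne_zero j))]
      rfl
    | succ l' =>
      rw [hf 0 (Fin.succ_ne_zero l').symm,
        ih l' _ (fun j hj => hf _ (by simpa [Fin.succ_inj] using hj))]
      rfl

lemma multiDP_zero (u : E n m → ℝ) : multiDP ((0, 0, 0) : MIdx n m) u = u := by
  show multiD 0 0 0 u = u
  unfold multiD
  rw [foldr_ofFn_id _ (fun j => by simp), foldr_ofFn_id _ (fun j => by simp)]
  simp

lemma multiDP_eY (l : Fin m) (u : E n m → ℝ) :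
    multiDP ((0, 0, Pi.single l 1) : MIdx n m) u = dl (eY n m l) u := by
  show multiD 0 0 (Pi.single l 1) u = _
  unfold multiD
  rw [foldr_ofFn_id (fun i : Fin n => (dl (eX n m i))^[(0 : Fin n → ℕ) i]) (fun j => by simp),
    foldr_ofFn_single l _ (fun j hj => by simp [Pi.single_apply, hj])]
  simp

lemma mem_closure_MI (z : Z n m) (hz : ∀ i, 0 ≤ z.1 i) (I : Finset (Fin n))
    (hI : ∀ i, i ∈ I ↔ z.1 i ≤ 1) : z ∈ closure (MI n m I) := by
  rw [mem_closure_iff_seq_limit]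
  refine ⟨fun k =>
    ((fun i => z.1 i + (1 / (k + 1 : ℝ)) * (if z.1 i ≤ 1 then 1 / 2 - z.1 i else 0)), z.2),
    ?_, ?_⟩
  · intro k
    have hk0 : (0:ℝ) ≤ (k : ℝ) := Nat.cast_nonneg k
    have hδ0 : 0 < 1 / (k + 1 : ℝ) := by positivity
    have hδ1 : 1 / (k + 1 : ℝ) ≤ 1 := by
      rw [div_le_one (by positivity)]; linarith
    refine ⟨fun i hi => ?_, fun j hj => ?_⟩
    · have h1 : z.1 i ≤ 1 := (hI i).mp hi
      have h0 := hz i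
      simp only [if_pos h1, Set.mem_Ioo]
      constructor
      · nlinarith
      · nlinarith
    · have h1 : 1 < z.1 j := lt_of_not_ge (fun h => hj ((hI j).mpr h))
      simpa [if_neg (not_le.mpr h1)] using h1
  · have hδ : Filter.Tendsto (fun k : ℕ => 1 / (k + 1 : ℝ)) Filter.atTop (nhds 0) :=
      tendsto_one_div_add_atTop_nhds_zero_nat
    have hf : Filter.Tendsto
        (fun k : ℕ => (fun i =>
          z.1 i + (1 / (k + 1 : ℝ)) * (if z.1 i ≤ 1 then 1 / 2 - z.1 i else 0)))
        Filter.atTop (nhds z.1) := by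
      rw [tendsto_pi_nhds]
      intro i
      have := Filter.Tendsto.add (tendsto_const_nhds (x := z.1 i))
        (hδ.mul (tendsto_const_nhds (x := if z.1 i ≤ 1 then 1 / 2 - z.1 i else 0)))
      simpa using this
    have := hf.prodMk_nhds (tendsto_const_nhds (x := z.2))
    simpa using this

lemma rho_line (P : E n m) (l : Fin m) (s : ℝ) :
    rho (P + s • eY n m l) P = |s| := by
  have hx : (P + s • eY n m l).2.1 = P.2.1 := by
    funext i; simp [eY]
  have ht : (P + s • eY n m l).1 = P.1 := by simp [eY]
  unfold rho rho0
  rw [ht, hx]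
  have h1 : (⨆ i : Fin n, |Fwf (P.2.1 i) - Fwf (P.2.1 i)|) = 0 := by
    rcases isEmpty_or_nonempty (Fin n) with h | h
    · exact Real.iSup_of_isEmpty _
    · simp
  have h2 : (⨆ l' : Fin m, |(P + s • eY n m l).2.2 l' - P.2.2 l'|) = |s| := by
    have hfun : ∀ l' : Fin m,
        |(P + s • eY n m l).2.2 l' - P.2.2 l'| = if l' = l then |s| else 0 := by
      intro l'
      rcases eq_or_ne l' l with rfl | hne
      · simp [eY]
      · simp [eY, Pi.single_apply, hne]
    haveI : Nonempty (Fin m) := ⟨l⟩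
    apply le_antisymm
    · refine ciSup_le fun l' => ?_
      rw [hfun l']
      split_ifs <;> simp [abs_nonneg]
    · have := le_ciSup (f := fun l' : Fin m => |(P + s • eY n m l).2.2 l' - P.2.2 l'|)
        (Set.Finite.bddAbove (Set.finite_range _)) l
      rw [hfun l, if_pos rfl] at this
      exact this
  rw [h1, h2]
  simp

lemma key_ineq (g : ℝ → ℝ) (S N h : ℝ) (hh : 0 < h) (hS : ∀ s, |g s| ≤ S)
    (hH : ∀ s ∈ Set.Icc (0:ℝ) h, |deriv g s - deriv g 0| ≤ N) :
    |deriv g 0| ≤ N + 2 * S / h := by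
  have hS0 : 0 ≤ S := (abs_nonneg (g 0)).trans (hS 0)
  by_cases hd : ∀ s ∈ Set.Icc (0:ℝ) h, DifferentiableAt ℝ g s
  · obtain ⟨c, hc, hslope⟩ := exists_deriv_eq_slope g hh
      (fun s hs => ((hd s hs).continuousAt).continuousWithinAt)
      (fun s hs => (hd s (Set.mem_Icc_of_Ioo hs)).differentiableWithinAt)
    have h1 : |deriv g c| ≤ 2 * S / h := by
      rw [hslope, sub_zero, abs_div, abs_of_pos hh]
      gcongr
      calc |g h - g 0| ≤ |g h| + |g 0| := abs_sub _ _
        _ ≤ 2 * S := by linarith [hS h, hS 0]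
    have h2 := hH c (Set.mem_Icc_of_Ioo hc)
    calc |deriv g 0| ≤ |deriv g c| + |deriv g c - deriv g 0| := by
          have := abs_sub_abs_le_abs_sub (deriv g 0) (deriv g c)
          have h3 := abs_sub_comm (deriv g c) (deriv g 0)
          linarith [abs_sub_abs_le_abs_sub (deriv g 0) (deriv g c),
            (abs_sub_comm (deriv g 0) (deriv g c))]
      _ ≤ 2 * S / h + N := by
          have h4 : |deriv g c - deriv g 0| ≤ N := h2
          linarith
      _ = N + 2 * S / h := by ring
  · push_neg at hd
    obtain ⟨s, hs, hns⟩ := hd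
    have h0 : deriv g s = 0 := deriv_zero_of_not_differentiableAt hns
    have h1 := hH s hs
    rw [h0] at h1
    have h2 : |deriv g 0| ≤ N := by
      rwa [zero_sub, abs_neg] at h1
    have h3 : 0 ≤ 2 * S / h := by positivity
    linarith

set_option maxHeartbeats 1000000 in
/-- Interpolation inequality (2.6): sup norm of `u_{y_l}`. -/
theorem statement6 (n m : ℕ) (hnm : 1 ≤ n + m) (T : ℝ) (hT : 0 < T)
    (a : ℝ) (ha : a ∈ Set.Ioo (0:ℝ) 1) :
    ∃ C > (0:ℝ), ∃ m₀ > (0:ℝ), ∀ u : E n m → ℝ,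
      MemCk2 0 a (Set.Icc 0 T) (Sbar n m) u → ∀ ε ∈ Set.Ioo (0:ℝ) 1, ∀ l : Fin m,
        supN (Set.Icc 0 T) (Sbar n m) (dl (eY n m l) u) ≤
          ENNReal.ofReal ε * Ck2N 0 a (Set.Icc 0 T) (Sbar n m) u
            + ENNReal.ofReal (C * ε ^ (-m₀)) * supN (Set.Icc 0 T) (Sbar n m) u := by
  obtain ⟨ha0, ha1⟩ := ha
  have hane : a ≠ 0 := ne_of_gt ha0
  refine ⟨2, by norm_num, 1 / a, by positivity, ?_⟩
  intro u hu ε hε l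
  obtain ⟨hε0, hε1⟩ := hε
  set J := Set.Icc (0:ℝ) T with hJ
  set N := Ck2N 0 a J (Sbar n m) u with hNdef
  set S := supN J (Sbar n m) u with hSdef
  have hNtop : N ≠ ⊤ := hu.1
  have hCpos : (0:ℝ) < 2 * ε ^ (-(1 / a)) := by
    have := Real.rpow_pos_of_pos hε0 (-(1 / a)); linarith
  by_cases hStop : S = ⊤
  · have hT' : ENNReal.ofReal (2 * ε ^ (-(1 / a))) * S = ⊤ := by
      rw [hStop, ENNReal.mul_top]
      simpa using ENNReal.ofReal_pos.mpr hCpos |>.ne'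
    rw [hT']
    simp
  · -- pointwise estimate
    have : ∀ P ∈ QT J (Sbar n m),
        ENNReal.ofReal |dl (eY n m l) u P| ≤
          ENNReal.ofReal ε * N + ENNReal.ofReal (2 * ε ^ (-(1 / a))) * S := by
      intro P hP
      set yv := eY n m l with hyv
      set g : ℝ → ℝ := fun s => u (P + s • yv) with hg
      set h := ε ^ (1 / a : ℝ) with hh
      have hhpos : 0 < h := Real.rpow_pos_of_pos hε0 _
      have hxeq : ∀ s : ℝ, (P + s • yv).2.1 = P.2.1 := by
        intro s; funext i; simp [hyv, eY]
      have hteq : ∀ s : ℝ, (P + s • yv).1 = P.1 := by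
        intro s; simp [hyv, eY]
      have hmemS : ∀ s : ℝ, (P + s • yv) ∈ QT J (Sbar n m) := by
        intro s
        refine ⟨by rw [hteq]; exact hP.1, fun i => ?_⟩
        rw [hxeq]; exact hP.2 i
      set I : Finset (Fin n) := Finset.univ.filter (fun i => P.2.1 i ≤ 1) with hIdef
      have hIiff : ∀ i, i ∈ I ↔ P.2.1 i ≤ 1 := by
        intro i; simp [hIdef]
      set DI : Set (Z n m) := Sbar n m ∩ closure (MI n m I) with hDI
      have hmemD : ∀ s : ℝ, (P + s • yv) ∈ QT J DI := by
        intro s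
        refine ⟨by rw [hteq]; exact hP.1, ⟨fun i => by rw [hxeq]; exact hP.2 i, ?_⟩⟩
        exact mem_closure_MI _ (fun i => by rw [hxeq]; exact hP.2 i) I
          (fun i => by rw [hxeq]; exact hIiff i)
      have hPD : P ∈ QT J DI := by
        have := hmemD 0; rwa [zero_smul, add_zero] at this
      -- identification of line derivatives along the line
      have hgd : ∀ s : ℝ, dl yv u (P + s • yv) = deriv g s := by
        intro s
        have e1 : (fun t : ℝ => u ((P + s • yv) + t • yv)) = fun t => g (s + t) := by
          funext t
          rw [hg]
          congr 1
          rw [add_smul, add_assoc]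
        calc dl yv u (P + s • yv) = deriv (fun t : ℝ => u ((P + s • yv) + t • yv)) 0 := rfl
          _ = deriv (fun t : ℝ => g (s + t)) 0 := by rw [e1]
          _ = deriv g (s + 0) := deriv_comp_const_add g s 0
          _ = deriv g s := by rw [add_zero]
      have hg0 : dl yv u P = deriv g 0 := by
        have := hgd 0; rwa [zero_smul, add_zero] at this
      -- sup bound along the line
      have hSbound : ∀ s : ℝ, |g s| ≤ S.toReal := by
        intro s
        have h1 : ENNReal.ofReal |g s| ≤ S := by
          rw [hSdef, supN]
          exact le_iSup₂ (f := fun Q (_ : Q ∈ QT J (Sbar n m)) => ENNReal.ofReal |u Q|)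
            (P + s • yv) (hmemS s)
        exact (ENNReal.ofReal_le_iff_le_toReal hStop).mp h1
      -- Hölder chain
      have step1 : holderN a J DI (dl yv u) ≤ CkN 1 a J DI u := by
        have hidx : MIdx.wt ((0, 0, Pi.single l 1) : MIdx n m) ≤ 1 := by
          simp [MIdx.wt, Finset.sum_pi_single']
        have h1 := ENNReal.le_tsum (f := fun p : Idx n m 1 => holderN a J DI (multiDP p.1 u))
          ⟨((0, 0, Pi.single l 1) : MIdx n m), hidx⟩
        rw [multiDP_eY l u] at h1
        exact h1
      have step2 : CkN 1 a J DI u ≤ pieceN I a J DI u := by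
        rw [pieceN]
        exact le_add_right (le_add_right (le_add_right (le_add_right
          (le_add_right (le_add_right le_self_add)))))
      have step3 : pieceN I a J DI u ≤ C2N a J (Sbar n m) u := by
        rw [C2N]
        exact Finset.single_le_sum
          (f := fun I' => pieceN I' a J (Sbar n m ∩ closure (MI n m I')) u)
          (fun _ _ => zero_le) (Finset.mem_univ I)
      have step4 : C2N a J (Sbar n m) u ≤ N := by
        have hidx : MIdx.wt ((0, 0, 0) : MIdx n m) ≤ 0 := by
          simp [MIdx.wt]
        have h1 := ENNReal.le_tsum
          (f := fun p : Idx n m 0 => C2N a J (Sbar n m) (multiDP p.1 u))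
          ⟨((0, 0, 0) : MIdx n m), hidx⟩
        rw [multiDP_zero] at h1
        exact h1
      have hchain : holderN a J DI (dl yv u) ≤ N :=
        ((step1.trans step2).trans step3).trans step4
      -- Hölder pair bound
      have hHol : ∀ s : ℝ, s ≠ 0 →
          |dl yv u (P + s • yv) - dl yv u P| ≤ N.toReal * |s| ^ a := by
        intro s hs
        have hne : P + s • yv ≠ P := by
          intro hcontra
          have h1 : (P + s • yv).2.2 l = P.2.2 l := by rw [hcontra]
          simp [hyv, eY] at h1
          exact hs h1
        have hr : rho (P + s • yv) P = |s| := rho_line P l s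
        have h1 : ENNReal.ofReal
            (|dl yv u (P + s • yv) - dl yv u P| / rho (P + s • yv) P ^ a)
            ≤ holderSemi a J DI (dl yv u) := by
          rw [holderSemi]
          exact le_iSup₂_of_le (P + s • yv) (hmemD s)
            (le_iSup₂_of_le P hPD (le_iSup_of_le hne le_rfl))
        have h2 : ENNReal.ofReal
            (|dl yv u (P + s • yv) - dl yv u P| / rho (P + s • yv) P ^ a) ≤ N := by
          refine h1.trans (le_trans ?_ hchain)
          rw [holderN]
          exact le_add_self
        have h3 : |dl yv u (P + s • yv) - dl yv u P| / rho (P + s • yv) P ^ a ≤ N.toReal :=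
          (ENNReal.ofReal_le_iff_le_toReal hNtop).mp h2
        rw [hr] at h3
        have hspos : (0:ℝ) < |s| ^ a := Real.rpow_pos_of_pos (abs_pos.mpr hs) a
        rw [div_le_iff₀ hspos] at h3
        linarith [h3]
      -- hypothesis for the key lemma
      have hH : ∀ s ∈ Set.Icc (0:ℝ) h, |deriv g s - deriv g 0| ≤ N.toReal * ε := by
        intro s hs
        rcases eq_or_ne s 0 with rfl | hs0
        · simp only [sub_self, abs_zero]
          positivity
        · have h1 := hHol s hs0
          rw [hgd, hg0] at h1
          refine h1.trans ?_
          have hsa : |s| ^ a ≤ ε := by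
            have hsh : |s| ≤ h := by rw [abs_of_nonneg hs.1]; exact hs.2
            calc |s| ^ a ≤ h ^ a := Real.rpow_le_rpow (abs_nonneg s) hsh ha0.le
              _ = ε := by
                rw [hh, ← Real.rpow_mul hε0.le, one_div_mul_cancel hane, Real.rpow_one]
          exact mul_le_mul_of_nonneg_left hsa ENNReal.toReal_nonneg
      have hkey : |deriv g 0| ≤ N.toReal * ε + 2 * S.toReal / h :=
        key_ineq g S.toReal (N.toReal * ε) h hhpos hSbound hH
      rw [← hg0] at hkey
      have hrhs : N.toReal * ε + 2 * S.toReal / h = ε * N.toReal + 2 * ε ^ (-(1 / a)) * S.toReal := by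
        rw [hh, Real.rpow_neg hε0.le, div_eq_mul_inv]
        ring
      rw [hrhs] at hkey
      calc ENNReal.ofReal |dl yv u P|
          ≤ ENNReal.ofReal (ε * N.toReal + 2 * ε ^ (-(1 / a)) * S.toReal) :=
            ENNReal.ofReal_le_ofReal hkey
        _ ≤ ENNReal.ofReal (ε * N.toReal) + ENNReal.ofReal (2 * ε ^ (-(1 / a)) * S.toReal) :=
            ENNReal.ofReal_add_le
        _ = ENNReal.ofReal ε * N + ENNReal.ofReal (2 * ε ^ (-(1 / a))) * S := by
            rw [ENNReal.ofReal_mul hε0.le, ENNReal.ofReal_mul hCpos.le,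
              ENNReal.ofReal_toReal hNtop, ENNReal.ofReal_toReal hStop]
    rw [supN]
    exact iSup₂_le this

end Kimura
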